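/- Let E be an equivalence relation on a finite state space S such that whenever (s,t) ∈ E: R(s,a) = R(t,a) for all actions a, and for every equivalence class c, ∑_{s'∈c} P(s,a)(s') = ∑_{s'∈c} P(t,a)(s'). Then for all n, the value iterates V_n (defined by V₀ = 0, V_{n+1}(s) = max_a [R(s,a) + γ ∑_{s'} P(s,a)(s') V_n(s')]) are constant on equivalence classes: (s,t) ∈ E implies V_n(s) = V_n(t). -/
import Mathlib


open Finset

/-- If `E` is a bisimulation relation (equal rewards, and equal transition probabilities
into each equivalence class), then the value-iteration iterates are constant on
`E`-equivalence classes. -/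
theorem bisimulation_value_invariant {S A : Type*} [Fintype S] [Fintype A] [Nonempty A]
    (E : S → S → Prop) (hE : Equivalence E)
    (R : S → A → ℝ) (P : S → A → S → ℝ) (γ : ℝ) (hγ0 : 0 ≤ γ) (hγ1 : γ < 1)
    [DecidableRel E]
    (hPnonneg : ∀ s a s', 0 ≤ P s a s') (hPsum : ∀ s a, ∑ s', P s a s' = 1)
    (hR : ∀ s t, E s t → ∀ a, R s a = R t a)
    (hP : ∀ s t, E s t → ∀ a (u : S),
      ∑ s' ∈ Finset.univ.filter (fun s' => E u s'), P s a s' =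
        ∑ s' ∈ Finset.univ.filter (fun s' => E u s'), P t a s')
    (V : ℕ → S → ℝ) (hV0 : ∀ s, V 0 s = 0)
    (hVsucc : ∀ n s, V (n + 1) s =
      Finset.univ.sup' Finset.univ_nonempty
        (fun a => R s a + γ * ∑ s', P s a s' * V n s')) :
    ∀ n s t, E s t → V n s = V n t := by
  intro n
  induction n with
  | zero => intro s t _; simp [hV0]
  | succ n ih =>
    intro s t hst
    let st : Setoid S := ⟨E, hE⟩
    haveI : DecidableEq (Quotient st) := fun x y =>
      Quotient.recOnSubsingleton₂ x y fun a b =>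
        decidable_of_iff (E a b) (Quotient.eq (r := st)).symm
    have key : ∀ (w : S) (a : A), ∑ s', P w a s' * V n s' =
        ∑ q : Quotient st, V n q.out *
          ∑ s' ∈ Finset.univ.filter (fun s' => E q.out s'), P w a s' := by
      intro w a
      rw [← Finset.sum_fiberwise Finset.univ (fun s' => Quotient.mk st s')
        (fun s' => P w a s' * V n s')]
      refine Finset.sum_congr rfl fun q _ => ?_
      have hfib : Finset.univ.filter (fun s' => Quotient.mk st s' = q) =
          Finset.univ.filter (fun s' => E q.out s') := by
        apply Finset.filter_congr
        intro x _
        constructor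
        · intro h
          have : Quotient.mk st x = Quotient.mk st q.out := by
            rw [h, Quotient.out_eq]
          exact hE.symm (Quotient.eq.mp this)
        · intro h
          have : Quotient.mk st x = Quotient.mk st q.out := Quotient.sound (hE.symm h)
          rw [this, Quotient.out_eq]
      rw [hfib, Finset.mul_sum]
      refine Finset.sum_congr rfl fun x hx => ?_
      have hx' : E q.out x := (Finset.mem_filter.mp hx).2
      rw [ih q.out x hx']
      ring
    rw [hVsucc, hVsucc]
    refine Finset.sup'_congr _ rfl fun a _ => ?_
    rw [hR s t hst a, key s a, key t a]
    congr 1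
    congr 1
    exact Finset.sum_congr rfl fun q _ => by rw [hP s t hst a q.out]
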